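/- Let w, m be positive natural numbers, let 0 < δ < 1, and let E : F_2^w → F_2^m be a code such that any two distinct codewords E(u₁), E(u₂) (for u₁ ≠ u₂) agree in at most δ·m positions (equivalently, have Hamming distance at least (1−δ)·m). Define the quantum fingerprint states |f(u)⟩ = (1/√m) Σ_{l=1}^{m} (−1)^{E_l(u)} |l⟩ ∈ ℂ^m. Then for all u₁ ≠ u₂, the inner product satisfies ⟨f(u₁)|f(u₂)⟩ ≤ 2δ − 1, and in particular ⟨f(u₁)|f(u₂)⟩ ≤ δ. -/

import Mathlib

/-- The quantum fingerprint state `|f(u)⟩ = (1/√m) ∑_{l} (−1)^{E_l(u)} |l⟩` of a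
bit string `u ∈ F₂^w`, relative to an encoding `E : F₂^w → F₂^m`. -/
noncomputable def fingerprint (w m : ℕ)
    (E : (Fin w → ZMod 2) → (Fin m → ZMod 2)) (u : Fin w → ZMod 2) :
    EuclideanSpace ℂ (Fin m) :=
  WithLp.toLp 2 (fun l => ((1 / Real.sqrt m : ℝ) : ℂ) * (if E u l = 0 then 1 else -1))

lemma fp_sign_mul (a b : ZMod 2) :
    (if a = 0 then (1:ℂ) else -1) * (if b = 0 then 1 else -1) =
    if a = b then 1 else -1 := by
  obtain rfl | rfl : a = 0 ∨ a = 1 := by revert a; decide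
  all_goals obtain rfl | rfl : b = 0 ∨ b = 1 := by revert b; decide
  all_goals norm_num

/-- If the code `E` has minimum distance at least `(1−δ)·m` (i.e. any two distinct
codewords agree in at most `δ·m` positions), then the inner product of the
fingerprint states of distinct strings is at most `2δ − 1`, and in particular
at most `δ`.  (The inner product is real, so we state the bound for its real
part and record that its imaginary part vanishes.) -/
theorem fingerprint_inner_le (w m : ℕ) (hw : 0 < w) (hm : 0 < m) (δ : ℝ)
    (hδ0 : 0 < δ) (hδ1 : δ < 1)
    (E : (Fin w → ZMod 2) → (Fin m → ZMod 2))
    (hE : ∀ u₁ u₂ : Fin w → ZMod 2, u₁ ≠ u₂ →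
      (1 - δ) * (m : ℝ) ≤ (hammingDist (E u₁) (E u₂) : ℝ)) :
    ∀ u₁ u₂ : Fin w → ZMod 2, u₁ ≠ u₂ →
      (inner ℂ (fingerprint w m E u₁) (fingerprint w m E u₂) : ℂ).im = 0 ∧
      (inner ℂ (fingerprint w m E u₁) (fingerprint w m E u₂) : ℂ).re ≤ 2 * δ - 1 ∧
      (inner ℂ (fingerprint w m E u₁) (fingerprint w m E u₂) : ℂ).re ≤ δ := by
  intro u₁ u₂ hne
  set d : ℕ := hammingDist (E u₁) (E u₂) with hd
  have hmR : (0:ℝ) < m := by exact_mod_cast hm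
  have hagree : (Finset.univ.filter fun l => E u₁ l = E u₂ l).card = m - d := by
    have := Finset.card_filter_add_card_filter_not
      (s := (Finset.univ : Finset (Fin m))) (p := fun l => E u₁ l = E u₂ l)
    simp only [Finset.card_univ, Fintype.card_fin] at this
    have hdc : d = (Finset.univ.filter fun l => ¬ E u₁ l = E u₂ l).card := by
      simp [hd, hammingDist]
    omega
  have hdm : d ≤ m := by
    calc d ≤ Fintype.card (Fin m) := hammingDist_le_card_fintype
    _ = m := by simp
  have hsum : ∑ l, (if E u₁ l = 0 then (1:ℂ) else -1) * (if E u₂ l = 0 then 1 else -1)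
      = (m : ℂ) - 2 * d := by
    simp only [fp_sign_mul]
    have : ∀ l : Fin m, (if E u₁ l = E u₂ l then (1:ℂ) else -1)
        = 2 * (if E u₁ l = E u₂ l then 1 else 0) - 1 := by
      intro l; split <;> norm_num
    rw [Finset.sum_congr rfl fun l _ => this l]
    rw [Finset.sum_sub_distrib, ← Finset.mul_sum, Finset.sum_boole, hagree]
    have : ((m - d : ℕ) : ℂ) = (m : ℂ) - d := by
      push_cast [Nat.cast_sub hdm]; ring
    simp [this]
    ring
  have key : (inner ℂ (fingerprint w m E u₁) (fingerprint w m E u₂) : ℂ)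
      = ((((m:ℝ) - 2 * d) / m : ℝ) : ℂ) := by
    rw [PiLp.inner_apply]
    simp only [fingerprint, RCLike.inner_apply]
    have hconj : ∀ a : ZMod 2,
        (starRingEnd ℂ) (if a = 0 then 1 else -1) = (if a = 0 then 1 else -1) := by
      intro a; split <;> simp
    have hc : (starRingEnd ℂ) ((1 / Real.sqrt m : ℝ) : ℂ) = ((1 / Real.sqrt m : ℝ) : ℂ) := by
      simp [Complex.conj_ofReal]
    have hmul : ((1 / Real.sqrt m : ℝ) : ℂ) * ((1 / Real.sqrt m : ℝ) : ℂ) = 1 / (m : ℂ) := by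
      rw [← Complex.ofReal_mul, div_mul_div_comm, Real.mul_self_sqrt hmR.le]
      push_cast; norm_num
    have step : ∀ l : Fin m,
        (starRingEnd ℂ) (((1 / Real.sqrt m : ℝ) : ℂ) * (if E u₁ l = 0 then 1 else -1)) *
          (((1 / Real.sqrt m : ℝ) : ℂ) * (if E u₂ l = 0 then 1 else -1)) =
        1 / (m : ℂ) * ((if E u₁ l = 0 then (1:ℂ) else -1) * (if E u₂ l = 0 then 1 else -1)) := by
      intro l
      rw [map_mul, hconj, hc, mul_mul_mul_comm, hmul]
    rw [Finset.sum_congr rfl fun l _ => (mul_comm _ _).trans (step l), ← Finset.mul_sum, hsum]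
    push_cast
    field_simp
  rw [key]
  have hdle := hE u₁ u₂ hne
  have hre : ((m:ℝ) - 2 * d) / m ≤ 2 * δ - 1 := by
    rw [div_le_iff₀ hmR]
    nlinarith
  refine ⟨by simp, by simpa using hre, ?_⟩
  simp only [Complex.ofReal_re]
  linarith
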